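/- Let P be a positive integer and p,q ∈ (0,1) real numbers such that pP + qP = 1 and p ≠ q. Then there exists a weighted graph R' on 2P vertices such that the graph R'_{>1/2} is bipartite and d_{K_m}(R(p,P;q,P)) < d_{K_m}(R') for every integer m with 2 ≤ m ≤ 2P. In fact, one may take R' to be the weighted graph obtained from R(p,P;q,P) by choosing one vertex u of weight p and one vertex v of weight q and changing both of their vertex weights to (p+q)/2 = 1/(2P), keeping all edge weights unchanged. -/

import Mathlib

open Filter

structure WeightedGraph (V : Type) [Fintype V] where
  vw : V → ℝ
  ew : V → V → ℝ
  vw_nonneg : ∀ v, 0 ≤ vw v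
  vw_le_one : ∀ v, vw v ≤ 1
  vw_sum : ∑ v, vw v = 1
  ew_nonneg : ∀ u v, 0 ≤ ew u v
  ew_le_one : ∀ u v, ew u v ≤ 1
  ew_symm : ∀ u v, ew u v = ew v u
  ew_self : ∀ v, ew v v = 0

namespace WeightedGraph

variable {V : Type} [Fintype V]

/-- The `K_m`-density of a weighted graph. -/
noncomputable def density (R : WeightedGraph V) (m : ℕ) : ℝ :=
  ∑ σ : Fin m → V, (∏ i, R.vw (σ i)) *
    ∏ p ∈ Finset.univ.filter (fun p : Fin m × Fin m => p.1 < p.2), R.ew (σ p.1) (σ p.2)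

/-- The simple graph `R_{>α}` of edges of weight greater than `α`. -/
def gtGraph (R : WeightedGraph V) (α : ℝ) : SimpleGraph V where
  Adj u v := u ≠ v ∧ α < R.ew u v
  symm := by
    refine ⟨?_⟩
    intro u v h
    refine ⟨h.1.symm, ?_⟩
    rw [R.ew_symm v u]
    exact h.2
  loopless := by refine ⟨?_⟩; intro v h; exact h.1 rfl

/-- `R` is `𝒦_t`-free. -/
def KtFree (R : WeightedGraph V) (t : ℕ) : Prop :=
  ¬ ∃ S₁ S₂ : Finset V, S₂ ⊆ S₁ ∧ 1 ≤ S₂.card ∧ S₁.card + S₂.card = t ∧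
      (R.gtGraph 0).IsClique (S₁ : Set V) ∧ (R.gtGraph (1/2)).IsClique (S₂ : Set V)

/-- The conditions (A1)–(A5) on a partition function `part`, for a `(b,a)`-partition
with the number of parts `a` implicit in the type of `part`. -/
def IsBAPartition (R : WeightedGraph V) (s : ℕ) {a : ℕ} (part : V → Fin a) : Prop :=
  Function.Surjective part ∧
  (∀ u v : V, u ≠ v → R.ew u v = 1/2 ∨ R.ew u v = 1) ∧
  (∀ u v : V, u ≠ v → (R.ew u v = 1/2 ↔ part u = part v)) ∧
  (∀ u v : V, part u = part v → R.vw u = R.vw v) ∧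
  (∀ i j : Fin a, (Finset.univ.filter fun x => part x = i).card ≤
      (Finset.univ.filter fun x => part x = j).card + 1) ∧
  (∀ u v : V, (Finset.univ.filter fun x => part x = part v).card ≤
      (Finset.univ.filter fun x => part x = part u).card → R.vw u ≤ R.vw v) ∧
  ((a = 1 ∧ ∀ i : Fin a, (Finset.univ.filter fun x => part x = i).card = s) ∨
   (2 ≤ a ∧ ∀ i : Fin a, (Finset.univ.filter fun x => part x = i).card ≤ s - 1))

/-- `R` admits a `(b,a)`-partition (with clique parameter `s`). -/
def AdmitsPartition (R : WeightedGraph V) (s b a : ℕ) : Prop :=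
  Fintype.card V = b ∧ 1 ≤ a ∧ ∃ part : V → Fin a, R.IsBAPartition s part

end WeightedGraph

/-- `π_s(𝒦_t)`: the supremum of the `K_s`-density over all `𝒦_t`-free weighted graphs. -/
noncomputable def piSup (s t : ℕ) : ℝ :=
  sSup {x : ℝ | ∃ (V : Type) (_ : Fintype V) (R : WeightedGraph V),
    R.KtFree t ∧ R.density s = x}

/-- The independence number of a simple graph. -/
noncomputable def indepNum {α : Type*} (G : SimpleGraph α) : ℕ :=
  sSup {k : ℕ | ∃ S : Finset α, (Gᶜ).IsNClique k S}

/-- The number `N(K_s, G)` of `s`-cliques of `G`. -/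
noncomputable def cliqueCount {α : Type*} (G : SimpleGraph α) (s : ℕ) : ℕ :=
  Set.ncard {S : Finset α | G.IsNClique s S}

/-- The Ramsey–Turán number `RT(n, K_s, K_t, ℓ)`. -/
noncomputable def RT (n s t : ℕ) (ℓ : ℝ) : ℕ :=
  sSup {N : ℕ | ∃ G : SimpleGraph (Fin n),
    G.CliqueFree t ∧ ((indepNum G : ℝ) < ℓ) ∧ N = cliqueCount G s}
/-- The two-part weighted graph `R(p,P;q,Q)`: `P` vertices of weight `p` and `Q` vertices of
weight `q`; edges inside a part have weight `1/2`, edges between the parts have weight `1`. -/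
noncomputable def Rpq (P Q : ℕ) (p q : ℝ) (hp : p ∈ Set.Ioo (0:ℝ) 1)
    (hq : q ∈ Set.Ioo (0:ℝ) 1) (hsum : p * P + q * Q = 1) :
    WeightedGraph (Fin P ⊕ Fin Q) where
  vw := Sum.elim (fun _ => p) (fun _ => q)
  ew u v := if u = v then 0 else if u.isLeft = v.isLeft then 1/2 else 1
  vw_nonneg v := by cases v <;> simp [le_of_lt hp.1, le_of_lt hq.1]
  vw_le_one v := by cases v <;> simp [le_of_lt hp.2, le_of_lt hq.2]
  vw_sum := by
    rw [Fintype.sum_sum_type]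
    simp only [Sum.elim_inl, Sum.elim_inr, Finset.sum_const, Finset.card_univ,
      Fintype.card_fin, nsmul_eq_mul]
    linarith
  ew_nonneg u v := by
    try dsimp only
    split
    · norm_num
    · split <;> norm_num
  ew_le_one u v := by
    try dsimp only
    split
    · norm_num
    · split <;> norm_num
  ew_symm u v := by
    try dsimp only
    rcases eq_or_ne u v with h | h
    · simp [h]
    · rw [if_neg h, if_neg (Ne.symm h)]
      by_cases h2 : u.isLeft = v.isLeft
      · rw [if_pos h2, if_pos h2.symm]
      · rw [if_neg h2, if_neg (fun e => h2 e.symm)]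
  ew_self v := by simp

open Finset in
lemma eqw_sum_ite (Pn : ℕ) (hP : 0 < Pn) (c x : ℝ) :
    ∑ k : Fin Pn, (if k = (⟨0, hP⟩ : Fin Pn) then c else x) = x * Pn + (c - x) := by
  have h : ∀ k : Fin Pn, (if k = (⟨0, hP⟩ : Fin Pn) then c else x)
      = x + (if k = (⟨0, hP⟩ : Fin Pn) then c - x else 0) := by
    intro k; split <;> ring
  rw [Finset.sum_congr rfl (fun k _ => h k), Finset.sum_add_distrib, Finset.sum_const,
    Finset.sum_ite_eq' Finset.univ, if_pos (Finset.mem_univ _)]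
  simp [mul_comm]

noncomputable def Rpq' (P : ℕ) (hP : 0 < P) (p q : ℝ) (hp : p ∈ Set.Ioo (0:ℝ) 1)
    (hq : q ∈ Set.Ioo (0:ℝ) 1) (hsum : p * P + q * P = 1) :
    WeightedGraph (Fin P ⊕ Fin P) where
  vw := Sum.elim (fun k => if k = (⟨0, hP⟩ : Fin P) then (p+q)/2 else p)
        (fun k => if k = (⟨0, hP⟩ : Fin P) then (p+q)/2 else q)
  ew := (Rpq P P p q hp hq hsum).ew
  vw_nonneg := by
    rintro (a|a) <;> simp only [Sum.elim_inl, Sum.elim_inr] <;> split <;>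
      linarith [hp.1, hp.2, hq.1, hq.2]
  vw_le_one := by
    rintro (a|a) <;> simp only [Sum.elim_inl, Sum.elim_inr] <;> split <;>
      linarith [hp.1, hp.2, hq.1, hq.2]
  vw_sum := by
    rw [Fintype.sum_sum_type]
    simp only [Sum.elim_inl, Sum.elim_inr]
    rw [eqw_sum_ite P hP, eqw_sum_ite P hP]
    linarith [hsum]
  ew_nonneg := (Rpq P P p q hp hq hsum).ew_nonneg
  ew_le_one := (Rpq P P p q hp hq hsum).ew_le_one
  ew_symm := (Rpq P P p q hp hq hsum).ew_symm
  ew_self := (Rpq P P p q hp hq hsum).ew_self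

section EqW

variable (P : ℕ) (hP : 0 < P) (p q : ℝ) (hp : p ∈ Set.Ioo (0:ℝ) 1)
  (hq : q ∈ Set.Ioo (0:ℝ) 1) (hsum : p * ↑P + q * ↑P = 1)

def eqwU : Fin P ⊕ Fin P := Sum.inl ⟨0, hP⟩
def eqwV : Fin P ⊕ Fin P := Sum.inr ⟨0, hP⟩

lemma eqw_ew_def (x y : Fin P ⊕ Fin P) :
    (Rpq P P p q hp hq hsum).ew x y
      = if x = y then 0 else if x.isLeft = y.isLeft then 1/2 else 1 := rfl

lemma eqw_vw_def (x : Fin P ⊕ Fin P) :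
    (Rpq P P p q hp hq hsum).vw x = if x.isLeft = true then p else q := by
  rcases x with a | a <;> simp [Rpq]

lemma eqw_vw_swap (x : Fin P ⊕ Fin P) :
    (Rpq P P p q hp hq hsum).vw (Sum.swap x) = if x.isLeft = true then q else p := by
  rcases x with a | a <;> simp [Rpq]

lemma eqw_ew_tau (x y : Fin P ⊕ Fin P) :
    (Rpq P P p q hp hq hsum).ew (Sum.swap x) (Sum.swap y)
      = (Rpq P P p q hp hq hsum).ew x y := by
  rcases x with a | a <;> rcases y with b | b <;> simp [Rpq]

lemma eqw_ew_pos {x y : Fin P ⊕ Fin P} (h : x ≠ y) :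
    0 < (Rpq P P p q hp hq hsum).ew x y := by
  rw [eqw_ew_def, if_neg h]
  split <;> norm_num

lemma eqw_uv_ne : eqwU P hP ≠ eqwV P hP := by simp [eqwU, eqwV]

lemma eqw_vw'_eq (x : Fin P ⊕ Fin P) (hu : x ≠ eqwU P hP) (hv : x ≠ eqwV P hP) :
    (Rpq' P hP p q hp hq hsum).vw x = (Rpq P P p q hp hq hsum).vw x := by
  rcases x with a | a
  · have h : a ≠ (⟨0, hP⟩ : Fin P) := fun h => hu (by rw [eqwU, h])
    simp [Rpq', Rpq, h]
  · have h : a ≠ (⟨0, hP⟩ : Fin P) := fun h => hv (by rw [eqwV, h])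
    simp [Rpq', Rpq, h]

lemma eqw_vw'_u : (Rpq' P hP p q hp hq hsum).vw (eqwU P hP) = (p+q)/2 := by
  simp [Rpq', eqwU]

lemma eqw_vw'_v : (Rpq' P hP p q hp hq hsum).vw (eqwV P hP) = (p+q)/2 := by
  simp [Rpq', eqwV]

lemma eqw_vw_u : (Rpq P P p q hp hq hsum).vw (eqwU P hP) = p := rfl
lemma eqw_vw_v : (Rpq P P p q hp hq hsum).vw (eqwV P hP) = q := rfl

lemma eqw_swap_u : Sum.swap (eqwU P hP) = eqwV P hP := rfl
lemma eqw_swap_v : Sum.swap (eqwV P hP) = eqwU P hP := rfl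

end EqW

def eqwMu (P : ℕ) (hP : 0 < P) : Equiv.Perm (Fin P ⊕ Fin P) :=
  Equiv.swap (eqwU P hP) (eqwV P hP)

def eqwNu (P : ℕ) (hP : 0 < P) (x : Fin P ⊕ Fin P) : Fin P ⊕ Fin P :=
  eqwMu P hP (Sum.swap x)

section EqW2

variable (P : ℕ) (hP : 0 < P)

lemma eqw_mu_u : eqwMu P hP (eqwU P hP) = eqwV P hP := Equiv.swap_apply_left _ _
lemma eqw_mu_v : eqwMu P hP (eqwV P hP) = eqwU P hP := Equiv.swap_apply_right _ _

lemma eqw_mu_ne {x : Fin P ⊕ Fin P} (hu : x ≠ eqwU P hP) (hv : x ≠ eqwV P hP) :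
    eqwMu P hP x = x := Equiv.swap_apply_of_ne_of_ne hu hv

lemma eqw_mu_mu (x : Fin P ⊕ Fin P) : eqwMu P hP (eqwMu P hP x) = x :=
  Equiv.swap_apply_self _ _ _

lemma eqw_swap_ne_u {x : Fin P ⊕ Fin P} (hv : x ≠ eqwV P hP) :
    Sum.swap x ≠ eqwU P hP := by
  intro h
  apply hv
  have := congrArg Sum.swap h
  rwa [Sum.swap_swap, eqw_swap_u] at this

lemma eqw_swap_ne_v {x : Fin P ⊕ Fin P} (hu : x ≠ eqwU P hP) :
    Sum.swap x ≠ eqwV P hP := by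
  intro h
  apply hu
  have := congrArg Sum.swap h
  rwa [Sum.swap_swap, eqw_swap_v] at this

lemma eqw_nu_u : eqwNu P hP (eqwU P hP) = eqwU P hP := by
  rw [eqwNu, eqw_swap_u, eqw_mu_v]

lemma eqw_nu_v : eqwNu P hP (eqwV P hP) = eqwV P hP := by
  rw [eqwNu, eqw_swap_v, eqw_mu_u]

lemma eqw_nu_ne {x : Fin P ⊕ Fin P} (hu : x ≠ eqwU P hP) (hv : x ≠ eqwV P hP) :
    eqwNu P hP x = Sum.swap x := by
  rw [eqwNu, eqw_mu_ne P hP (eqw_swap_ne_u P hP hv) (eqw_swap_ne_v P hP hu)]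

lemma eqw_tau_mu (x : Fin P ⊕ Fin P) : Sum.swap (eqwMu P hP x) = eqwNu P hP x := by
  by_cases hu : x = eqwU P hP
  · rw [hu, eqw_mu_u, eqw_swap_v, eqw_nu_u]
  · by_cases hv : x = eqwV P hP
    · rw [hv, eqw_mu_v, eqw_swap_u, eqw_nu_v]
    · rw [eqw_mu_ne P hP hu hv, eqw_nu_ne P hP hu hv]

lemma eqw_nu_mu (x : Fin P ⊕ Fin P) : eqwNu P hP (eqwMu P hP x) = Sum.swap x := by
  by_cases hu : x = eqwU P hP
  · rw [hu, eqw_mu_u, eqw_nu_v, eqw_swap_u]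
  · by_cases hv : x = eqwV P hP
    · rw [hv, eqw_mu_v, eqw_nu_u, eqw_swap_v]
    · rw [eqw_mu_ne P hP hu hv, eqw_nu_ne P hP hu hv]

lemma eqw_nu_nu (x : Fin P ⊕ Fin P) : eqwNu P hP (eqwNu P hP x) = x := by
  by_cases hu : x = eqwU P hP
  · rw [hu, eqw_nu_u, eqw_nu_u]
  · by_cases hv : x = eqwV P hP
    · rw [hv, eqw_nu_v, eqw_nu_v]
    · rw [eqw_nu_ne P hP hu hv, eqw_nu_ne P hP (eqw_swap_ne_u P hP hv) (eqw_swap_ne_v P hP hu),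
        Sum.swap_swap]

lemma eqw_nu_inj : Function.Injective (eqwNu P hP) := by
  intro x y h
  have := congrArg (eqwNu P hP) h
  rwa [eqw_nu_nu, eqw_nu_nu] at this

end EqW2
open Finset

lemma eqw_sign_aux {p q : ℝ} (hp : 0 < p) (hq : 0 < q) {a b : ℕ} (hab : a ≤ b) :
    0 ≤ (q - p) * (p ^ a * q ^ b - p ^ b * q ^ a) * ((1/2:ℝ) ^ a - (1/2) ^ b) := by
  have h3 : (0:ℝ) ≤ (1/2:ℝ) ^ a - (1/2) ^ b :=
    sub_nonneg.2 (pow_le_pow_of_le_one (by norm_num) (by norm_num) hab)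
  have e1 : p ^ b = p ^ a * p ^ (b - a) := by rw [← pow_add, Nat.add_sub_cancel' hab]
  have e2 : q ^ b = q ^ a * q ^ (b - a) := by rw [← pow_add, Nat.add_sub_cancel' hab]
  rcases le_total p q with hpq | hpq
  · refine mul_nonneg (mul_nonneg (by linarith) (sub_nonneg.2 ?_)) h3
    rw [e1, e2]
    have h := pow_le_pow_left₀ hp.le hpq (b - a)
    nlinarith [mul_le_mul_of_nonneg_left h (mul_nonneg (pow_nonneg hp.le a) (pow_nonneg hq.le a))]
  · refine mul_nonneg (mul_nonneg_of_nonpos_of_nonpos (by linarith) (sub_nonpos.2 ?_)) h3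
    rw [e1, e2]
    have h := pow_le_pow_left₀ hq.le hpq (b - a)
    nlinarith [mul_le_mul_of_nonneg_left h (mul_nonneg (pow_nonneg hp.le a) (pow_nonneg hq.le a))]

lemma eqw_sign {p q : ℝ} (hp : 0 < p) (hq : 0 < q) (a b : ℕ) :
    0 ≤ (q - p) * (p ^ a * q ^ b - p ^ b * q ^ a) * ((1/2:ℝ) ^ a - (1/2) ^ b) := by
  rcases le_total a b with hab | hab
  · exact eqw_sign_aux hp hq hab
  · have h : (q - p) * (p ^ a * q ^ b - p ^ b * q ^ a) * ((1/2:ℝ) ^ a - (1/2) ^ b)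
        = (q - p) * (p ^ b * q ^ a - p ^ a * q ^ b) * ((1/2:ℝ) ^ b - (1/2) ^ a) := by ring
    rw [h]; exact eqw_sign_aux hp hq hab

lemma eqw_prod_side {ι : Type*} (s : Finset ι) (f : ι → ℝ)
    (Pr : ι → Prop) [DecidablePred Pr] (c d : ℝ)
    (h1 : ∀ i ∈ s, Pr i → f i = c) (h2 : ∀ i ∈ s, ¬ Pr i → f i = d) :
    ∏ i ∈ s, f i = c ^ (s.filter Pr).card * d ^ (s.filter (fun i => ¬ Pr i)).card := by
  rw [← Finset.prod_filter_mul_prod_filter_not s Pr]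
  congr 1
  · rw [Finset.prod_congr rfl (fun i hi => h1 i (Finset.mem_filter.1 hi).1
      (Finset.mem_filter.1 hi).2), Finset.prod_const]
  · rw [Finset.prod_congr rfl (fun i hi => h2 i (Finset.mem_filter.1 hi).1
      (Finset.mem_filter.1 hi).2), Finset.prod_const]

lemma eqw_pairs_split {M : Type*} [CommMonoid M] {m : ℕ} (F : Fin m → Fin m → M)
    (hsymm : ∀ i j, F i j = F j i) (i₀ : Fin m) :
    ∏ pr ∈ Finset.univ.filter (fun pr : Fin m × Fin m => pr.1 < pr.2), F pr.1 pr.2 =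
      (∏ pr ∈ (Finset.univ.filter (fun pr : Fin m × Fin m => pr.1 < pr.2)).filter
          (fun pr => pr.1 ≠ i₀ ∧ pr.2 ≠ i₀), F pr.1 pr.2) *
      ∏ j ∈ Finset.univ.erase i₀, F i₀ j := by
  rw [← Finset.prod_filter_mul_prod_filter_not
      (Finset.univ.filter (fun pr : Fin m × Fin m => pr.1 < pr.2))
      (fun pr => pr.1 ≠ i₀ ∧ pr.2 ≠ i₀)]
  congr 1
  refine Finset.prod_nbij' (fun pr => if pr.1 = i₀ then pr.2 else pr.1)
    (fun j => if i₀ < j then (i₀, j) else (j, i₀)) ?_ ?_ ?_ ?_ ?_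
  · intro pr hpr
    simp only [Finset.mem_filter, Finset.mem_univ, true_and, not_and_or, not_not] at hpr
    obtain ⟨hlt, hcase⟩ := hpr
    rcases hcase with h1 | h2
    · try dsimp only
      rw [if_pos h1]
      exact Finset.mem_erase.2 ⟨by rw [← h1]; exact (ne_of_gt hlt), Finset.mem_univ _⟩
    · have hne : pr.1 ≠ i₀ := by rw [← h2]; exact ne_of_lt hlt
      try dsimp only
      rw [if_neg hne]
      exact Finset.mem_erase.2 ⟨hne, Finset.mem_univ _⟩
  · intro j hj
    have hne := (Finset.mem_erase.1 hj).1
    rcases hne.lt_or_gt with h1 | h1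
    · try dsimp only
      rw [if_neg (not_lt.2 h1.le)]
      simp only [Finset.mem_filter, Finset.mem_univ, true_and, not_and_or, not_not]
      exact ⟨h1, Or.inr trivial⟩
    · try dsimp only
      rw [if_pos h1]
      simp only [Finset.mem_filter, Finset.mem_univ, true_and, not_and_or, not_not]
      exact ⟨h1, Or.inl trivial⟩
  · intro pr hpr
    simp only [Finset.mem_filter, Finset.mem_univ, true_and, not_and_or, not_not] at hpr
    obtain ⟨hlt, hcase⟩ := hpr
    rcases hcase with h1 | h2
    · try dsimp only
      rw [if_pos h1, if_pos (h1 ▸ hlt), ← h1]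
    · have hne : pr.1 ≠ i₀ := by rw [← h2]; exact ne_of_lt hlt
      try dsimp only
      rw [if_neg hne, if_neg (by rw [← h2]; exact not_lt.2 hlt.le), ← h2]
  · intro j hj
    have hne := (Finset.mem_erase.1 hj).1
    rcases hne.lt_or_gt with h1 | h1
    · try dsimp only
      rw [if_neg (not_lt.2 h1.le)]
      simp [hne]
    · try dsimp only
      rw [if_pos h1]
      simp
  · intro pr hpr
    simp only [Finset.mem_filter, Finset.mem_univ, true_and, not_and_or, not_not] at hpr
    obtain ⟨hlt, hcase⟩ := hpr
    rcases hcase with h1 | h2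
    · try dsimp only
      rw [if_pos h1, h1]
    · have hne : pr.1 ≠ i₀ := by rw [← h2]; exact ne_of_lt hlt
      try dsimp only
      rw [if_neg hne, ← h2]
      exact hsymm _ _

noncomputable def eqwE (P : ℕ) (p q : ℝ) (hp : p ∈ Set.Ioo (0:ℝ) 1)
    (hq : q ∈ Set.Ioo (0:ℝ) 1) (hsum : p * P + q * P = 1) {m : ℕ}
    (σ : Fin m → Fin P ⊕ Fin P) : ℝ :=
  ∏ pr ∈ Finset.univ.filter (fun pr : Fin m × Fin m => pr.1 < pr.2),
    (Rpq P P p q hp hq hsum).ew (σ pr.1) (σ pr.2)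

noncomputable def eqwH (P : ℕ) (hP : 0 < P) (p q : ℝ) (hp : p ∈ Set.Ioo (0:ℝ) 1)
    (hq : q ∈ Set.Ioo (0:ℝ) 1) (hsum : p * P + q * P = 1) {m : ℕ}
    (σ : Fin m → Fin P ⊕ Fin P) : ℝ :=
  ((∏ i, (Rpq' P hP p q hp hq hsum).vw (σ i)) - ∏ i, (Rpq P P p q hp hq hsum).vw (σ i)) *
    eqwE P p q hp hq hsum σ

section EqW3

variable (P : ℕ) (hP : 0 < P) (p q : ℝ) (hp : p ∈ Set.Ioo (0:ℝ) 1)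
  (hq : q ∈ Set.Ioo (0:ℝ) 1) (hsum : p * ↑P + q * ↑P = 1)

lemma eqw_vw_pos (x : Fin P ⊕ Fin P) : 0 < (Rpq P P p q hp hq hsum).vw x := by
  rw [eqw_vw_def]
  split
  · exact hp.1
  · exact hq.1

lemma eqwE_nonneg {m : ℕ} (σ : Fin m → Fin P ⊕ Fin P) : 0 ≤ eqwE P p q hp hq hsum σ :=
  Finset.prod_nonneg fun _ _ => (Rpq P P p q hp hq hsum).ew_nonneg _ _

lemma eqwE_pos {m : ℕ} {σ : Fin m → Fin P ⊕ Fin P} (hinj : Function.Injective σ) :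
    0 < eqwE P p q hp hq hsum σ := by
  refine Finset.prod_pos fun pr hpr => ?_
  have hlt : pr.1 < pr.2 := (Finset.mem_filter.1 hpr).2
  exact eqw_ew_pos P p q hp hq hsum (fun h => (ne_of_lt hlt) (hinj h))

lemma eqwE_zero {m : ℕ} {σ : Fin m → Fin P ⊕ Fin P} (hinj : ¬ Function.Injective σ) :
    eqwE P p q hp hq hsum σ = 0 := by
  obtain ⟨i, j, hij, hne⟩ := Function.not_injective_iff.1 hinj
  rcases hne.lt_or_gt with h1 | h1
  · refine Finset.prod_eq_zero (i := (i, j)) (by simp [h1]) ?_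
    rw [hij]
    exact (Rpq P P p q hp hq hsum).ew_self _
  · refine Finset.prod_eq_zero (i := (j, i)) (by simp [h1]) ?_
    rw [hij]
    exact (Rpq P P p q hp hq hsum).ew_self _

lemma eqwE_tau {m : ℕ} (σ : Fin m → Fin P ⊕ Fin P) :
    eqwE P p q hp hq hsum (fun i => Sum.swap (σ i)) = eqwE P p q hp hq hsum σ :=
  Finset.prod_congr rfl fun pr _ => eqw_ew_tau P p q hp hq hsum _ _

lemma eqwE_nu_mu {m : ℕ} (σ : Fin m → Fin m → Fin P ⊕ Fin P) : True := trivial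

lemma eqwE_nu {m : ℕ} (σ : Fin m → Fin P ⊕ Fin P) :
    eqwE P p q hp hq hsum (fun i => eqwNu P hP (σ i))
      = eqwE P p q hp hq hsum (fun i => eqwMu P hP (σ i)) := by
  have h : (fun i => eqwNu P hP (σ i)) = fun i => Sum.swap (eqwMu P hP (σ i)) :=
    funext fun i => (eqw_tau_mu P hP (σ i)).symm
  rw [h, eqwE_tau P p q hp hq hsum (fun i => eqwMu P hP (σ i))]

end EqW3

section EqW4

variable (P : ℕ) (hP : 0 < P) (p q : ℝ) (hp : p ∈ Set.Ioo (0:ℝ) 1)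
  (hq : q ∈ Set.Ioo (0:ℝ) 1) (hsum : p * ↑P + q * ↑P = 1)

lemma eqw_ew_u_left {x : Fin P ⊕ Fin P} (hx : x.isLeft = true) (hne : x ≠ eqwU P hP) :
    (Rpq P P p q hp hq hsum).ew (eqwU P hP) x = 1/2 := by
  rw [eqw_ew_def, if_neg (Ne.symm hne), if_pos (by simp [eqwU, hx])]

lemma eqw_ew_u_right {x : Fin P ⊕ Fin P} (hx : ¬ x.isLeft = true) :
    (Rpq P P p q hp hq hsum).ew (eqwU P hP) x = 1 := by
  have h1 : eqwU P hP ≠ x := by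
    intro h; apply hx; rw [← h]; rfl
  rw [eqw_ew_def, if_neg h1, if_neg (by
    rw [show (eqwU P hP).isLeft = true from rfl]; exact fun h => hx h.symm)]

lemma eqw_ew_v_left {x : Fin P ⊕ Fin P} (hx : x.isLeft = true) :
    (Rpq P P p q hp hq hsum).ew (eqwV P hP) x = 1 := by
  have h1 : eqwV P hP ≠ x := by
    intro h; rw [← h] at hx; simp [eqwV] at hx
  rw [eqw_ew_def, if_neg h1, if_neg (by simp [eqwV, hx])]

lemma eqw_ew_v_right {x : Fin P ⊕ Fin P} (hx : ¬ x.isLeft = true) (hne : x ≠ eqwV P hP) :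
    (Rpq P P p q hp hq hsum).ew (eqwV P hP) x = 1/2 := by
  rw [eqw_ew_def, if_neg (Ne.symm hne), if_pos (by
    have h2 : x.isLeft = false := by simpa using hx
    rw [h2]; rfl)]

end EqW4

section EqW5

variable (P : ℕ) (hP : 0 < P) (p q : ℝ) (hp : p ∈ Set.Ioo (0:ℝ) 1)
  (hq : q ∈ Set.Ioo (0:ℝ) 1) (hsum : p * ↑P + q * ↑P = 1)

lemma eqw_K_uonly {m : ℕ} (σ : Fin m → Fin P ⊕ Fin P) (hinj : Function.Injective σ)
    (i₀ : Fin m) (hi₀ : σ i₀ = eqwU P hP) (hv : ∀ i, σ i ≠ eqwV P hP) :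
    0 ≤ eqwH P hP p q hp hq hsum σ
      + eqwH P hP p q hp hq hsum (fun i => Sum.swap (σ i))
      + eqwH P hP p q hp hq hsum (fun i => eqwNu P hP (σ i))
      + eqwH P hP p q hp hq hsum (fun i => eqwMu P hP (σ i)) := by
  classical
  set R := Rpq P P p q hp hq hsum with hR
  set R' := Rpq' P hP p q hp hq hsum with hR'
  set s : Finset (Fin m) := Finset.univ.erase i₀ with hs
  have hsu : ∀ j ∈ s, σ j ≠ eqwU P hP := by
    intro j hj h
    exact (Finset.mem_erase.1 hj).1 (hinj (h.trans hi₀.symm))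
  set a := (s.filter (fun j => (σ j).isLeft = true)).card with ha
  set b := (s.filter (fun j => ¬ (σ j).isLeft = true)).card with hb
  -- vertex weight products over s
  have w1 : ∏ j ∈ s, R.vw (σ j) = p ^ a * q ^ b :=
    eqw_prod_side s _ _ p q
      (fun j _ h => by rw [hR, eqw_vw_def, if_pos h])
      (fun j _ h => by rw [hR, eqw_vw_def, if_neg h])
  have w2 : ∏ j ∈ s, R.vw (Sum.swap (σ j)) = q ^ a * p ^ b :=
    eqw_prod_side s _ _ q p
      (fun j _ h => by rw [hR, eqw_vw_swap, if_pos h])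
      (fun j _ h => by rw [hR, eqw_vw_swap, if_neg h])
  have hmu_s : ∀ j ∈ s, eqwMu P hP (σ j) = σ j :=
    fun j hj => eqw_mu_ne P hP (hsu j hj) (hv j)
  have hnu_s : ∀ j ∈ s, eqwNu P hP (σ j) = Sum.swap (σ j) :=
    fun j hj => eqw_nu_ne P hP (hsu j hj) (hv j)
  have hvw' : ∀ j ∈ s, R'.vw (σ j) = R.vw (σ j) :=
    fun j hj => eqw_vw'_eq P hP p q hp hq hsum _ (hsu j hj) (hv j)
  have hvw'2 : ∀ j ∈ s, R'.vw (Sum.swap (σ j)) = R.vw (Sum.swap (σ j)) :=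
    fun j hj => eqw_vw'_eq P hP p q hp hq hsum _
      (eqw_swap_ne_u P hP (hv j)) (eqw_swap_ne_v P hP (hsu j hj))
  have key : ∀ (f : (Fin P ⊕ Fin P) → ℝ) (g : Fin m → Fin P ⊕ Fin P),
      ∏ i, f (g i) = f (g i₀) * ∏ j ∈ s, f (g j) :=
    fun f g => (Finset.mul_prod_erase Finset.univ (fun i => f (g i)) (Finset.mem_univ i₀)).symm
  -- the eight full vertex-weight products
  have P1 : ∏ i, R.vw (σ i) = p * (p ^ a * q ^ b) := by
    rw [key _ σ, hi₀, hR, eqw_vw_u, ← w1, hR]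
  have P1' : ∏ i, R'.vw (σ i) = (p+q)/2 * (p ^ a * q ^ b) := by
    rw [key _ σ, hi₀, hR', eqw_vw'_u, Finset.prod_congr rfl hvw', ← w1, hR]
  have P2 : ∏ i, R.vw (Sum.swap (σ i)) = q * (q ^ a * p ^ b) := by
    rw [key _ (fun i => Sum.swap (σ i))]
    rw [hi₀, eqw_swap_u, hR, eqw_vw_v, ← w2, hR]
  have P2' : ∏ i, R'.vw (Sum.swap (σ i)) = (p+q)/2 * (q ^ a * p ^ b) := by
    rw [key _ (fun i => Sum.swap (σ i))]
    rw [hi₀, eqw_swap_u, hR', eqw_vw'_v, Finset.prod_congr rfl hvw'2, ← w2, hR]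
  have P3 : ∏ i, R.vw (eqwNu P hP (σ i)) = p * (q ^ a * p ^ b) := by
    rw [key _ (fun i => eqwNu P hP (σ i))]
    rw [hi₀, eqw_nu_u, hR, eqw_vw_u,
      Finset.prod_congr rfl (fun j hj => by rw [hnu_s j hj]), ← w2, hR]
  have P3' : ∏ i, R'.vw (eqwNu P hP (σ i)) = (p+q)/2 * (q ^ a * p ^ b) := by
    rw [key _ (fun i => eqwNu P hP (σ i))]
    rw [hi₀, eqw_nu_u, hR', eqw_vw'_u,
      Finset.prod_congr rfl (fun j hj => by rw [hnu_s j hj, hvw'2 j hj]), ← w2, hR]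
  have P4 : ∏ i, R.vw (eqwMu P hP (σ i)) = q * (p ^ a * q ^ b) := by
    rw [key _ (fun i => eqwMu P hP (σ i))]
    rw [hi₀, eqw_mu_u, hR, eqw_vw_v,
      Finset.prod_congr rfl (fun j hj => by rw [hmu_s j hj]), ← w1, hR]
  have P4' : ∏ i, R'.vw (eqwMu P hP (σ i)) = (p+q)/2 * (p ^ a * q ^ b) := by
    rw [key _ (fun i => eqwMu P hP (σ i))]
    rw [hi₀, eqw_mu_u, hR', eqw_vw'_v,
      Finset.prod_congr rfl (fun j hj => by rw [hmu_s j hj, hvw' j hj]), ← w1, hR]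
  -- edge products
  set EC := ∏ pr ∈ (Finset.univ.filter (fun pr : Fin m × Fin m => pr.1 < pr.2)).filter
      (fun pr => pr.1 ≠ i₀ ∧ pr.2 ≠ i₀), R.ew (σ pr.1) (σ pr.2) with hEC
  have hECnn : 0 ≤ EC := Finset.prod_nonneg fun _ _ => R.ew_nonneg _ _
  have hmem_s : ∀ (i : Fin m), i ≠ i₀ → i ∈ s :=
    fun i h => Finset.mem_erase.2 ⟨h, Finset.mem_univ _⟩
  have E1 : eqwE P p q hp hq hsum σ = EC * ((1/2:ℝ) ^ a * 1 ^ b) := by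
    have hsplit := eqw_pairs_split (fun i j => R.ew (σ i) (σ j))
      (fun i j => R.ew_symm _ _) i₀
    try simp only at hsplit
    have hinner : ∏ j ∈ s, R.ew (σ i₀) (σ j) = (1/2:ℝ) ^ a * 1 ^ b :=
      eqw_prod_side s _ _ (1/2 : ℝ) 1
        (fun j hj h => by rw [hi₀, hR, eqw_ew_u_left P hP p q hp hq hsum h (hsu j hj)])
        (fun j _ h => by rw [hi₀, hR, eqw_ew_u_right P hP p q hp hq hsum h])
    rw [show eqwE P p q hp hq hsum σ
        = ∏ pr ∈ Finset.univ.filter (fun pr : Fin m × Fin m => pr.1 < pr.2),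
          R.ew (σ pr.1) (σ pr.2) from rfl, hsplit, hinner, hEC]
  have E2 : eqwE P p q hp hq hsum (fun i => eqwMu P hP (σ i))
      = EC * ((1:ℝ) ^ a * (1/2) ^ b) := by
    have hsplit := eqw_pairs_split (fun i j => R.ew (eqwMu P hP (σ i)) (eqwMu P hP (σ j)))
      (fun i j => R.ew_symm _ _) i₀
    try simp only at hsplit
    have houter : ∏ pr ∈ (Finset.univ.filter (fun pr : Fin m × Fin m => pr.1 < pr.2)).filter
        (fun pr => pr.1 ≠ i₀ ∧ pr.2 ≠ i₀), R.ew (eqwMu P hP (σ pr.1)) (eqwMu P hP (σ pr.2))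
        = EC := by
      refine Finset.prod_congr rfl fun pr hpr => ?_
      have h12 := (Finset.mem_filter.1 hpr).2
      rw [hmu_s _ (hmem_s _ h12.1), hmu_s _ (hmem_s _ h12.2)]
    have hinner : ∏ j ∈ s, R.ew (eqwMu P hP (σ i₀)) (eqwMu P hP (σ j))
        = (1:ℝ) ^ a * (1/2) ^ b := by
      have hbase : ∀ j ∈ s, R.ew (eqwMu P hP (σ i₀)) (eqwMu P hP (σ j))
          = R.ew (eqwV P hP) (σ j) := by
        intro j hj
        rw [hi₀, eqw_mu_u, hmu_s j hj]
      rw [Finset.prod_congr rfl hbase]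
      exact eqw_prod_side s _ _ (1:ℝ) (1/2 : ℝ)
        (fun j _ h => by rw [hR, eqw_ew_v_left P hP p q hp hq hsum h])
        (fun j hj h => by rw [hR, eqw_ew_v_right P hP p q hp hq hsum h (hv j)])
    rw [show eqwE P p q hp hq hsum (fun i => eqwMu P hP (σ i))
        = ∏ pr ∈ Finset.univ.filter (fun pr : Fin m × Fin m => pr.1 < pr.2),
          R.ew (eqwMu P hP (σ pr.1)) (eqwMu P hP (σ pr.2)) from rfl, hsplit, houter, hinner]
  have E3 : eqwE P p q hp hq hsum (fun i => Sum.swap (σ i)) = eqwE P p q hp hq hsum σ :=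
    eqwE_tau P p q hp hq hsum σ
  have E4 : eqwE P p q hp hq hsum (fun i => eqwNu P hP (σ i))
      = eqwE P p q hp hq hsum (fun i => eqwMu P hP (σ i)) :=
    eqwE_nu P hP p q hp hq hsum σ
  have hH : ∀ g : Fin m → Fin P ⊕ Fin P, eqwH P hP p q hp hq hsum g
      = ((∏ i, R'.vw (g i)) - ∏ i, R.vw (g i)) * eqwE P p q hp hq hsum g := fun g => rfl
  rw [hH, hH, hH, hH, P1, P1', P2, P2', P3, P3', P4, P4', E3, E4, E1, E2]
  have hfin : ((p+q)/2 * (p ^ a * q ^ b) - p * (p ^ a * q ^ b)) * (EC * ((1/2:ℝ) ^ a * 1 ^ b))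
      + ((p+q)/2 * (q ^ a * p ^ b) - q * (q ^ a * p ^ b)) * (EC * ((1/2:ℝ) ^ a * 1 ^ b))
      + ((p+q)/2 * (q ^ a * p ^ b) - p * (q ^ a * p ^ b)) * (EC * ((1:ℝ) ^ a * (1/2) ^ b))
      + ((p+q)/2 * (p ^ a * q ^ b) - q * (p ^ a * q ^ b)) * (EC * ((1:ℝ) ^ a * (1/2) ^ b))
      = EC * ((q - p) * (p ^ a * q ^ b - p ^ b * q ^ a) * ((1/2:ℝ) ^ a - (1/2) ^ b)) / 2 := by
    ring
  rw [hfin]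
  exact div_nonneg (mul_nonneg hECnn (eqw_sign hp.1 hq.1 a b)) (by norm_num)

end EqW5

section EqW6

variable (P : ℕ) (hP : 0 < P) (p q : ℝ) (hp : p ∈ Set.Ioo (0:ℝ) 1)
  (hq : q ∈ Set.Ioo (0:ℝ) 1) (hsum : p * ↑P + q * ↑P = 1)

lemma eqw_h_both_eq {m : ℕ} (σ : Fin m → Fin P ⊕ Fin P) (hinj : Function.Injective σ)
    (iu iv : Fin m) (hiu : σ iu = eqwU P hP) (hiv : σ iv = eqwV P hP) :
    eqwH P hP p q hp hq hsum σ
      = ((p+q)/2 * ((p+q)/2) - p * q) *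
        (∏ j ∈ (Finset.univ.erase iu).erase iv, (Rpq P P p q hp hq hsum).vw (σ j)) *
        eqwE P p q hp hq hsum σ := by
  classical
  set R := Rpq P P p q hp hq hsum with hR
  set R' := Rpq' P hP p q hp hq hsum with hR'
  have hne_uv : iu ≠ iv := by
    intro h
    apply eqw_uv_ne P hP
    rw [← hiu, ← hiv, h]
  have hiv_mem : iv ∈ Finset.univ.erase iu :=
    Finset.mem_erase.2 ⟨hne_uv.symm, Finset.mem_univ _⟩
  have hrest : ∀ j ∈ (Finset.univ.erase iu).erase iv, σ j ≠ eqwU P hP ∧ σ j ≠ eqwV P hP := by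
    intro j hj
    have h1 := (Finset.mem_erase.1 hj).1
    have h2 := (Finset.mem_erase.1 (Finset.mem_erase.1 hj).2).1
    exact ⟨fun h => h2 (hinj (h.trans hiu.symm)), fun h => h1 (hinj (h.trans hiv.symm))⟩
  have key : ∀ f : (Fin P ⊕ Fin P) → ℝ,
      ∏ i, f (σ i) = f (σ iu) * (f (σ iv) * ∏ j ∈ (Finset.univ.erase iu).erase iv, f (σ j)) := by
    intro f
    rw [← Finset.mul_prod_erase Finset.univ (fun i => f (σ i)) (Finset.mem_univ iu),
      ← Finset.mul_prod_erase (Finset.univ.erase iu) (fun i => f (σ i)) hiv_mem]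
  have hprod_eq : ∏ j ∈ (Finset.univ.erase iu).erase iv, R'.vw (σ j)
      = ∏ j ∈ (Finset.univ.erase iu).erase iv, R.vw (σ j) :=
    Finset.prod_congr rfl fun j hj =>
      eqw_vw'_eq P hP p q hp hq hsum _ (hrest j hj).1 (hrest j hj).2
  have hH : eqwH P hP p q hp hq hsum σ
      = ((∏ i, R'.vw (σ i)) - ∏ i, R.vw (σ i)) * eqwE P p q hp hq hsum σ := rfl
  rw [hH, key R.vw, key R'.vw, hiu, hiv, hprod_eq]
  rw [hR', eqw_vw'_u, eqw_vw'_v, hR, eqw_vw_u, eqw_vw_v]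
  ring

lemma eqw_h_both_nonneg {m : ℕ} (σ : Fin m → Fin P ⊕ Fin P) (hinj : Function.Injective σ)
    (iu iv : Fin m) (hiu : σ iu = eqwU P hP) (hiv : σ iv = eqwV P hP) :
    0 ≤ eqwH P hP p q hp hq hsum σ := by
  rw [eqw_h_both_eq P hP p q hp hq hsum σ hinj iu iv hiu hiv]
  have h1 : 0 ≤ (p+q)/2 * ((p+q)/2) - p * q := by nlinarith [sq_nonneg (p - q)]
  have h2 : 0 ≤ ∏ j ∈ (Finset.univ.erase iu).erase iv, (Rpq P P p q hp hq hsum).vw (σ j) :=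
    Finset.prod_nonneg fun j _ => (Rpq P P p q hp hq hsum).vw_nonneg _
  exact mul_nonneg (mul_nonneg h1 h2) (eqwE_nonneg P p q hp hq hsum σ)

lemma eqw_h_both_pos (hne : p ≠ q) {m : ℕ} (σ : Fin m → Fin P ⊕ Fin P)
    (hinj : Function.Injective σ)
    (iu iv : Fin m) (hiu : σ iu = eqwU P hP) (hiv : σ iv = eqwV P hP) :
    0 < eqwH P hP p q hp hq hsum σ := by
  rw [eqw_h_both_eq P hP p q hp hq hsum σ hinj iu iv hiu hiv]
  have hne2 : p - q ≠ 0 := sub_ne_zero.2 hne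
  have h1 : 0 < (p+q)/2 * ((p+q)/2) - p * q := by nlinarith [pow_two_pos_of_ne_zero hne2]
  have h2 : 0 < ∏ j ∈ (Finset.univ.erase iu).erase iv, (Rpq P P p q hp hq hsum).vw (σ j) :=
    Finset.prod_pos fun j _ => eqw_vw_pos P p q hp hq hsum _
  exact mul_pos (mul_pos h1 h2) (eqwE_pos P p q hp hq hsum hinj)

lemma eqw_h_neither {m : ℕ} (σ : Fin m → Fin P ⊕ Fin P)
    (hu : ∀ i, σ i ≠ eqwU P hP) (hv : ∀ i, σ i ≠ eqwV P hP) :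
    eqwH P hP p q hp hq hsum σ = 0 := by
  have hH : eqwH P hP p q hp hq hsum σ
      = ((∏ i, (Rpq' P hP p q hp hq hsum).vw (σ i)) - ∏ i, (Rpq P P p q hp hq hsum).vw (σ i)) *
        eqwE P p q hp hq hsum σ := rfl
  rw [hH, Finset.prod_congr rfl
    (fun i _ => eqw_vw'_eq P hP p q hp hq hsum (σ i) (hu i) (hv i)), sub_self, zero_mul]

lemma eqw_h_noninj {m : ℕ} (σ : Fin m → Fin P ⊕ Fin P)
    (hinj : ¬ Function.Injective σ) :
    eqwH P hP p q hp hq hsum σ = 0 := by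
  have hH : eqwH P hP p q hp hq hsum σ
      = ((∏ i, (Rpq' P hP p q hp hq hsum).vw (σ i)) - ∏ i, (Rpq P P p q hp hq hsum).vw (σ i)) *
        eqwE P p q hp hq hsum σ := rfl
  rw [hH, eqwE_zero P p q hp hq hsum hinj, mul_zero]

lemma eqw_K_vonly {m : ℕ} (σ : Fin m → Fin P ⊕ Fin P) (hinj : Function.Injective σ)
    (i₀ : Fin m) (hi₀ : σ i₀ = eqwV P hP) (hu : ∀ i, σ i ≠ eqwU P hP) :
    0 ≤ eqwH P hP p q hp hq hsum σ
      + eqwH P hP p q hp hq hsum (fun i => Sum.swap (σ i))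
      + eqwH P hP p q hp hq hsum (fun i => eqwNu P hP (σ i))
      + eqwH P hP p q hp hq hsum (fun i => eqwMu P hP (σ i)) := by
  have hinj' : Function.Injective (fun i => eqwMu P hP (σ i)) :=
    fun i j h => hinj ((eqwMu P hP).injective h)
  have h0 : (fun i => eqwMu P hP (σ i)) i₀ = eqwU P hP := by
    simp only
    rw [hi₀, eqw_mu_v]
  have hv' : ∀ i, (fun i => eqwMu P hP (σ i)) i ≠ eqwV P hP := by
    intro i h
    simp only at h
    have := congrArg (eqwMu P hP) h
    rw [eqw_mu_mu, eqw_mu_v] at this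
    exact hu i this
  have hK := eqw_K_uonly P hP p q hp hq hsum _ hinj' i₀ h0 hv'
  have e1 : (fun i => Sum.swap ((fun i => eqwMu P hP (σ i)) i)) = fun i => eqwNu P hP (σ i) :=
    funext fun i => eqw_tau_mu P hP (σ i)
  have e2 : (fun i => eqwNu P hP ((fun i => eqwMu P hP (σ i)) i)) = fun i => Sum.swap (σ i) :=
    funext fun i => eqw_nu_mu P hP (σ i)
  have e3 : (fun i => eqwMu P hP ((fun i => eqwMu P hP (σ i)) i)) = σ :=
    funext fun i => eqw_mu_mu P hP (σ i)
  rw [e1, e2, e3] at hK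
  linarith [hK]

end EqW6

def eqwNuE (P : ℕ) (hP : 0 < P) : Equiv.Perm (Fin P ⊕ Fin P) :=
  Function.Involutive.toPerm (eqwNu P hP) (eqw_nu_nu P hP)

def eqwSigma (P m : ℕ) (hmP : m ≤ P + P) : Fin m → Fin P ⊕ Fin P := fun i =>
  if (i : ℕ) % 2 = 0 then Sum.inl ⟨(i : ℕ) / 2, by have := i.isLt; omega⟩
  else Sum.inr ⟨(i : ℕ) / 2, by have := i.isLt; omega⟩

lemma eqwSigma_inj (P m : ℕ) (hmP : m ≤ P + P) : Function.Injective (eqwSigma P m hmP) := by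
  intro i j hij
  unfold eqwSigma at hij
  by_cases h1 : (i : ℕ) % 2 = 0 <;> by_cases h2 : (j : ℕ) % 2 = 0
  · rw [if_pos h1, if_pos h2] at hij
    simp only [Sum.inl.injEq, Fin.mk.injEq] at hij
    exact Fin.ext (by omega)
  · rw [if_pos h1, if_neg h2] at hij
    simp at hij
  · rw [if_neg h1, if_pos h2] at hij
    simp at hij
  · rw [if_neg h1, if_neg h2] at hij
    simp only [Sum.inr.injEq, Fin.mk.injEq] at hij
    exact Fin.ext (by omega)

lemma eqwSigma_zero (P m : ℕ) (hP : 0 < P) (hm : 0 < m) (hmP : m ≤ P + P) :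
    eqwSigma P m hmP ⟨0, hm⟩ = eqwU P hP := by
  unfold eqwSigma eqwU
  norm_num

lemma eqwSigma_one (P m : ℕ) (hP : 0 < P) (hm : 1 < m) (hmP : m ≤ P + P) :
    eqwSigma P m hmP ⟨1, hm⟩ = eqwV P hP := by
  unfold eqwSigma eqwV
  norm_num

section EqW7

variable (P : ℕ) (hP : 0 < P) (p q : ℝ) (hp : p ∈ Set.Ioo (0:ℝ) 1)
  (hq : q ∈ Set.Ioo (0:ℝ) 1) (hsum : p * ↑P + q * ↑P = 1)

lemma eqw_sum_swap {m : ℕ} :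
    ∑ σ : Fin m → Fin P ⊕ Fin P, eqwH P hP p q hp hq hsum (fun i => Sum.swap (σ i))
      = ∑ σ : Fin m → Fin P ⊕ Fin P, eqwH P hP p q hp hq hsum σ :=
  Fintype.sum_equiv (Equiv.arrowCongr (Equiv.refl (Fin m)) (Equiv.sumComm (Fin P) (Fin P)))
    _ _ (fun _ => rfl)

lemma eqw_sum_nu {m : ℕ} :
    ∑ σ : Fin m → Fin P ⊕ Fin P, eqwH P hP p q hp hq hsum (fun i => eqwNu P hP (σ i))
      = ∑ σ : Fin m → Fin P ⊕ Fin P, eqwH P hP p q hp hq hsum σ :=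
  Fintype.sum_equiv (Equiv.arrowCongr (Equiv.refl (Fin m)) (eqwNuE P hP))
    _ _ (fun _ => rfl)

lemma eqw_sum_mu {m : ℕ} :
    ∑ σ : Fin m → Fin P ⊕ Fin P, eqwH P hP p q hp hq hsum (fun i => eqwMu P hP (σ i))
      = ∑ σ : Fin m → Fin P ⊕ Fin P, eqwH P hP p q hp hq hsum σ :=
  Fintype.sum_equiv (Equiv.arrowCongr (Equiv.refl (Fin m)) (eqwMu P hP))
    _ _ (fun _ => rfl)

lemma eqw_density_lt (hne : p ≠ q) {m : ℕ} (hm2 : 2 ≤ m) (hmP : m ≤ P + P) :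
    (Rpq P P p q hp hq hsum).density m < (Rpq' P hP p q hp hq hsum).density m := by
  classical
  have hdiff : (Rpq' P hP p q hp hq hsum).density m - (Rpq P P p q hp hq hsum).density m
      = ∑ σ : Fin m → Fin P ⊕ Fin P, eqwH P hP p q hp hq hsum σ := by
    rw [WeightedGraph.density, WeightedGraph.density, ← Finset.sum_sub_distrib]
    refine Finset.sum_congr rfl fun σ _ => ?_
    have h1 : (∏ pr ∈ Finset.univ.filter (fun pr : Fin m × Fin m => pr.1 < pr.2),
        (Rpq' P hP p q hp hq hsum).ew (σ pr.1) (σ pr.2)) = eqwE P p q hp hq hsum σ := rfl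
    have h2 : (∏ pr ∈ Finset.univ.filter (fun pr : Fin m × Fin m => pr.1 < pr.2),
        (Rpq P P p q hp hq hsum).ew (σ pr.1) (σ pr.2)) = eqwE P p q hp hq hsum σ := rfl
    rw [h1, h2, ← sub_mul]
    rfl
  suffices hpos : 0 < ∑ σ : Fin m → Fin P ⊕ Fin P, eqwH P hP p q hp hq hsum σ by linarith
  have h4 : ∑ σ : Fin m → Fin P ⊕ Fin P,
      (eqwH P hP p q hp hq hsum σ
        + eqwH P hP p q hp hq hsum (fun i => Sum.swap (σ i))
        + eqwH P hP p q hp hq hsum (fun i => eqwNu P hP (σ i))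
        + eqwH P hP p q hp hq hsum (fun i => eqwMu P hP (σ i)))
      = 4 * ∑ σ : Fin m → Fin P ⊕ Fin P, eqwH P hP p q hp hq hsum σ := by
    rw [Finset.sum_add_distrib, Finset.sum_add_distrib, Finset.sum_add_distrib,
      eqw_sum_swap P hP p q hp hq hsum, eqw_sum_nu P hP p q hp hq hsum,
      eqw_sum_mu P hP p q hp hq hsum]
    ring
  have hKnn : ∀ σ : Fin m → Fin P ⊕ Fin P,
      0 ≤ eqwH P hP p q hp hq hsum σ
        + eqwH P hP p q hp hq hsum (fun i => Sum.swap (σ i))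
        + eqwH P hP p q hp hq hsum (fun i => eqwNu P hP (σ i))
        + eqwH P hP p q hp hq hsum (fun i => eqwMu P hP (σ i)) := by
    intro σ
    by_cases hinj : Function.Injective σ
    · by_cases hu : ∃ i, σ i = eqwU P hP
      · by_cases hv : ∃ i, σ i = eqwV P hP
        · obtain ⟨iu, hiu⟩ := hu
          obtain ⟨iv, hiv⟩ := hv
          have hswinj : Function.Injective (fun i => Sum.swap (σ i)) :=
            fun i j h => hinj (by
              have := congrArg Sum.swap h
              rwa [Sum.swap_swap, Sum.swap_swap] at this)
          have hnuinj : Function.Injective (fun i => eqwNu P hP (σ i)) :=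
            fun i j h => hinj (eqw_nu_inj P hP h)
          have hmuinj : Function.Injective (fun i => eqwMu P hP (σ i)) :=
            fun i j h => hinj ((eqwMu P hP).injective h)
          refine add_nonneg (add_nonneg (add_nonneg ?_ ?_) ?_) ?_
          · exact eqw_h_both_nonneg P hP p q hp hq hsum σ hinj iu iv hiu hiv
          · exact eqw_h_both_nonneg P hP p q hp hq hsum _ hswinj iv iu
              (by show Sum.swap (σ iv) = _; rw [hiv, eqw_swap_v])
              (by show Sum.swap (σ iu) = _; rw [hiu, eqw_swap_u])
          · exact eqw_h_both_nonneg P hP p q hp hq hsum _ hnuinj iu iv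
              (by show eqwNu P hP (σ iu) = _; rw [hiu, eqw_nu_u])
              (by show eqwNu P hP (σ iv) = _; rw [hiv, eqw_nu_v])
          · exact eqw_h_both_nonneg P hP p q hp hq hsum _ hmuinj iv iu
              (by show eqwMu P hP (σ iv) = _; rw [hiv, eqw_mu_v])
              (by show eqwMu P hP (σ iu) = _; rw [hiu, eqw_mu_u])
        · push_neg at hv
          obtain ⟨iu, hiu⟩ := hu
          exact eqw_K_uonly P hP p q hp hq hsum σ hinj iu hiu hv
      · by_cases hv : ∃ i, σ i = eqwV P hP
        · push_neg at hu
          obtain ⟨iv, hiv⟩ := hv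
          exact eqw_K_vonly P hP p q hp hq hsum σ hinj iv hiv hu
        · push_neg at hu
          push_neg at hv
          rw [eqw_h_neither P hP p q hp hq hsum σ hu hv,
            eqw_h_neither P hP p q hp hq hsum _ (fun i => eqw_swap_ne_u P hP (hv i))
              (fun i => eqw_swap_ne_v P hP (hu i)),
            eqw_h_neither P hP p q hp hq hsum _
              (fun i => by rw [eqw_nu_ne P hP (hu i) (hv i)]; exact eqw_swap_ne_u P hP (hv i))
              (fun i => by rw [eqw_nu_ne P hP (hu i) (hv i)]; exact eqw_swap_ne_v P hP (hu i)),
            eqw_h_neither P hP p q hp hq hsum _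
              (fun i => by rw [eqw_mu_ne P hP (hu i) (hv i)]; exact hu i)
              (fun i => by rw [eqw_mu_ne P hP (hu i) (hv i)]; exact hv i)]
          norm_num
    · have hsw : ¬ Function.Injective (fun i => Sum.swap (σ i)) :=
        fun h => hinj (fun i j hij => h (show Sum.swap (σ i) = Sum.swap (σ j) by rw [hij]))
      have hnu : ¬ Function.Injective (fun i => eqwNu P hP (σ i)) :=
        fun h => hinj (fun i j hij => h (show eqwNu P hP (σ i) = eqwNu P hP (σ j) by rw [hij]))
      have hmu : ¬ Function.Injective (fun i => eqwMu P hP (σ i)) :=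
        fun h => hinj (fun i j hij => h (show eqwMu P hP (σ i) = eqwMu P hP (σ j) by rw [hij]))
      rw [eqw_h_noninj P hP p q hp hq hsum σ hinj, eqw_h_noninj P hP p q hp hq hsum _ hsw,
        eqw_h_noninj P hP p q hp hq hsum _ hnu, eqw_h_noninj P hP p q hp hq hsum _ hmu]
      norm_num
  -- the strict witness
  have h0m : 0 < m := by omega
  have h1m : 1 < m := by omega
  set σ₀ := eqwSigma P m hmP with hσ₀
  have hσinj : Function.Injective σ₀ := eqwSigma_inj P m hmP
  have hiu : σ₀ ⟨0, h0m⟩ = eqwU P hP := eqwSigma_zero P m hP h0m hmP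
  have hiv : σ₀ ⟨1, h1m⟩ = eqwV P hP := eqwSigma_one P m hP h1m hmP
  have hswinj : Function.Injective (fun i => Sum.swap (σ₀ i)) :=
    fun i j h => hσinj (by
      have := congrArg Sum.swap h
      rwa [Sum.swap_swap, Sum.swap_swap] at this)
  have hnuinj : Function.Injective (fun i => eqwNu P hP (σ₀ i)) :=
    fun i j h => hσinj (eqw_nu_inj P hP h)
  have hmuinj : Function.Injective (fun i => eqwMu P hP (σ₀ i)) :=
    fun i j h => hσinj ((eqwMu P hP).injective h)
  have hKpos : 0 < eqwH P hP p q hp hq hsum σ₀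
      + eqwH P hP p q hp hq hsum (fun i => Sum.swap (σ₀ i))
      + eqwH P hP p q hp hq hsum (fun i => eqwNu P hP (σ₀ i))
      + eqwH P hP p q hp hq hsum (fun i => eqwMu P hP (σ₀ i)) := by
    have k1 := eqw_h_both_pos P hP p q hp hq hsum hne σ₀ hσinj _ _ hiu hiv
    have k2 := eqw_h_both_nonneg P hP p q hp hq hsum _ hswinj ⟨1, h1m⟩ ⟨0, h0m⟩
      (by show Sum.swap (σ₀ ⟨1, h1m⟩) = _; rw [hiv, eqw_swap_v])
      (by show Sum.swap (σ₀ ⟨0, h0m⟩) = _; rw [hiu, eqw_swap_u])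
    have k3 := eqw_h_both_nonneg P hP p q hp hq hsum _ hnuinj ⟨0, h0m⟩ ⟨1, h1m⟩
      (by show eqwNu P hP (σ₀ ⟨0, h0m⟩) = _; rw [hiu, eqw_nu_u])
      (by show eqwNu P hP (σ₀ ⟨1, h1m⟩) = _; rw [hiv, eqw_nu_v])
    have k4 := eqw_h_both_nonneg P hP p q hp hq hsum _ hmuinj ⟨1, h1m⟩ ⟨0, h0m⟩
      (by show eqwMu P hP (σ₀ ⟨1, h1m⟩) = _; rw [hiv, eqw_mu_v])
      (by show eqwMu P hP (σ₀ ⟨0, h0m⟩) = _; rw [hiu, eqw_mu_u])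
    linarith
  have hsum_pos : 0 < ∑ σ : Fin m → Fin P ⊕ Fin P,
      (eqwH P hP p q hp hq hsum σ
        + eqwH P hP p q hp hq hsum (fun i => Sum.swap (σ i))
        + eqwH P hP p q hp hq hsum (fun i => eqwNu P hP (σ i))
        + eqwH P hP p q hp hq hsum (fun i => eqwMu P hP (σ i))) :=
    Finset.sum_pos' (fun σ _ => hKnn σ) ⟨σ₀, Finset.mem_univ _, hKpos⟩
  rw [h4] at hsum_pos
  linarith

end EqW7

theorem equalizing_weights_improves_density (P : ℕ) (hP : 0 < P) (p q : ℝ)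
    (hp : p ∈ Set.Ioo (0:ℝ) 1) (hq : q ∈ Set.Ioo (0:ℝ) 1)
    (hsum : p * P + q * P = 1) (hne : p ≠ q) :
    ∃ R' : WeightedGraph (Fin P ⊕ Fin P),
      (∀ x y, R'.ew x y = (Rpq P P p q hp hq hsum).ew x y) ∧
      R'.vw (Sum.inl ⟨0, hP⟩) = (p + q) / 2 ∧
      R'.vw (Sum.inr ⟨0, hP⟩) = (p + q) / 2 ∧
      (∀ x : Fin P, x ≠ ⟨0, hP⟩ → R'.vw (Sum.inl x) = p) ∧
      (∀ y : Fin P, y ≠ ⟨0, hP⟩ → R'.vw (Sum.inr y) = q) ∧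
      (R'.gtGraph (1/2)).Colorable 2 ∧
      ∀ m : ℕ, 2 ≤ m → m ≤ P + P →
        (Rpq P P p q hp hq hsum).density m < R'.density m := by
  refine ⟨Rpq' P hP p q hp hq hsum, fun x y => rfl,
    eqw_vw'_u P hP p q hp hq hsum, eqw_vw'_v P hP p q hp hq hsum,
    fun x hx => by simp [Rpq', hx], fun y hy => by simp [Rpq', hy], ?_, ?_⟩
  · refine ⟨SimpleGraph.Coloring.mk (fun x => if x.isLeft then (0 : Fin 2) else 1) ?_⟩
    intro x y hadj
    obtain ⟨hxy, hgt⟩ := hadj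
    by_cases h : x.isLeft = y.isLeft
    · exfalso
      have hew : (Rpq' P hP p q hp hq hsum).ew x y = 1/2 := by
        rw [show (Rpq' P hP p q hp hq hsum).ew x y
            = (Rpq P P p q hp hq hsum).ew x y from rfl,
          eqw_ew_def, if_neg hxy, if_pos h]
      rw [hew] at hgt
      norm_num at hgt
    · cases hxL : x.isLeft <;> cases hyL : y.isLeft <;> simp [hxL, hyL] <;> simp [hxL, hyL] at h
  · intro m hm2 hmP
    exact eqw_density_lt P hP p q hp hq hsum hne hm2 hmP
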